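/- Let A be a multiset of positive integers in which 1 occurs exactly once and each positive integer j occurs at most j times. Then f_{A,a}(x)·f_{A,b}(x) > f_{A,a+b}(x) for all real x ≥ 5 and positive integers a, b except a = b = 1; for a = b = 1, f_{A,1}(5)² ≥ f_{A,2}(5) (with equality iff 2 occurs exactly twice in A), and f_{A,1}(x)² > f_{A,2}(x) for all x > 5. -/

import Mathlib

open scoped Classical

/-- Sum of those divisors of `j` that belong to the multiset of positive integers
with multiplicity function `μ`, counted with multiplicity: `σ_A(j) = ∑_{d ∣ j} d·μ(d)`. -/
noncomputable def sigmaA (μ : ℕ → ℕ) (j : ℕ) : ℕ := ∑ d ∈ Nat.divisors j, d * μ d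

/-- The polynomials `f_{A,n}(x)` associated with the multiset of positive integers
with multiplicity function `μ`, defined (equivalently to the generating function
`∑ f_{A,n}(x) qⁿ = ∏_{a∈A} (1/(1-q^a))^x`) by `f_{A,0} = 1` and the recurrence
`f_{A,n}(x) = (x/n) ∑_{j=1}^{n} σ_A(j) f_{A,n-j}(x)`. -/
noncomputable def fA (μ : ℕ → ℕ) : ℕ → ℝ → ℝ
  | 0, _ => 1
  | n + 1, x =>
      x / (n + 1) * ∑ j ∈ Finset.range (n + 1), (sigmaA μ (j + 1) : ℝ) * fA μ (n - j) x
  decreasing_by exact Nat.lt_succ_of_le (Nat.sub_le n j)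

/-- `f_{A,n}(x)` for an ordinary set `A` of positive integers. -/
noncomputable def fS (A : Set ℕ) : ℕ → ℝ → ℝ := fA (fun a => if a ∈ A then 1 else 0)

/-! ### Auxiliary material -/

section Aux

open Finset

lemma fA_zero (μ : ℕ → ℕ) (x : ℝ) : fA μ 0 x = 1 := by rw [fA]

lemma fA_succ (μ : ℕ → ℕ) (x : ℝ) (n : ℕ) : fA μ (n+1) x
    = x / (n + 1) * ∑ j ∈ Finset.range (n + 1), (sigmaA μ (j + 1) : ℝ) * fA μ (n - j) x := by
  rw [fA]

/-- `σ₂`-analogue: sum of squares of divisors. -/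
def sig2 (m : ℕ) : ℕ := ∑ d ∈ Nat.divisors m, d * d

lemma sigmaA_le_sig2 {μ : ℕ → ℕ} (hμ : ∀ j, μ j ≤ j) (m : ℕ) : sigmaA μ m ≤ sig2 m :=
  Finset.sum_le_sum fun d _ => Nat.mul_le_mul_left d (hμ d)

lemma sigmaA_le_sig2' {μ : ℕ → ℕ} (hμ : ∀ j, μ j ≤ j) (m : ℕ) {B : ℕ} (hB : sig2 m ≤ B) :
    (sigmaA μ m : ℝ) ≤ (B : ℝ) := by
  exact_mod_cast (sigmaA_le_sig2 hμ m).trans hB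

lemma one_le_sigmaA' {μ : ℕ → ℕ} (hμ1 : μ 1 = 1) (m : ℕ) (hm : 1 ≤ m) :
    (1:ℝ) ≤ (sigmaA μ m : ℝ) := by
  have h1 : 1 ∈ Nat.divisors m := Nat.one_mem_divisors.2 (by omega)
  have : 1 ≤ sigmaA μ m :=
    calc 1 = 1 * μ 1 := by rw [hμ1]
    _ ≤ ∑ d ∈ Nat.divisors m, d * μ d :=
      Finset.single_le_sum (f := fun d => d * μ d) (fun d _ => Nat.zero_le _) h1
  exact_mod_cast this

lemma sig2_le (m : ℕ) : (sig2 m : ℝ) ≤ 2 * m ^ 2 := by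
  rcases Nat.eq_zero_or_pos m with h | h
  · subst h; simp [sig2]
  have key : (sig2 m : ℝ) = ∑ d ∈ Nat.divisors m, ((m / d : ℕ) : ℝ) ^ 2 := by
    unfold sig2
    rw [← Nat.sum_div_divisors m (fun d => d * d)]
    push_cast
    simp [sq]
  have h1mem : 1 ∈ Nat.divisors m := Nat.one_mem_divisors.2 (by omega)
  rw [key, Finset.sum_eq_sum_sdiff_singleton_add h1mem]
  have h2 : ∑ d ∈ Nat.divisors m \ {1}, ((m / d : ℕ) : ℝ) ^ 2 ≤ (m:ℝ)^2 := by
    have sub : Nat.divisors m \ {1} ⊆ Finset.Icc 2 m := by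
      intro d hd
      simp only [Finset.mem_sdiff, Nat.mem_divisors, Finset.mem_singleton] at hd
      have h3 : d ∣ m := hd.1.1
      have hd1 : 1 ≤ d := Nat.pos_of_dvd_of_pos h3 h
      have : d ≤ m := Nat.le_of_dvd h h3
      simp only [Finset.mem_Icc]; omega
    have step1 : ∑ d ∈ Nat.divisors m \ {1}, ((m / d : ℕ) : ℝ) ^ 2
        ≤ ∑ d ∈ Finset.Icc 2 m, (m:ℝ)^2 * (1/((d:ℝ)-1) - 1/(d:ℝ)) := by
      refine (Finset.sum_le_sum_of_subset_of_nonneg sub fun d _ _ => by positivity).trans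
        (Finset.sum_le_sum fun d hd => ?_)
      simp only [Finset.mem_Icc] at hd
      have hd2 : (2:ℝ) ≤ (d:ℝ) := by exact_mod_cast hd.1
      calc ((m / d : ℕ) : ℝ) ^ 2 ≤ ((m:ℝ)/(d:ℝ)) ^ 2 :=
            pow_le_pow_left₀ (by positivity) Nat.cast_div_le 2
        _ = (m:ℝ)^2/(d:ℝ)^2 := div_pow _ _ _
        _ ≤ (m:ℝ)^2/(((d:ℝ)-1)*(d:ℝ)) := by gcongr <;> nlinarith
        _ = (m:ℝ)^2 * (1/((d:ℝ)-1) - 1/(d:ℝ)) := by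
            rw [eq_comm, mul_sub, mul_one_div, mul_one_div]
            rw [div_sub_div _ _ (by nlinarith) (by nlinarith)]
            ring_nf
    have tel : ∑ d ∈ Finset.Icc 2 m, (1/((d:ℝ)-1) - 1/(d:ℝ)) = 1 - 1/(m:ℝ) := by
      have hIco : Finset.Icc 2 m = Finset.Ico 2 (m+1) := by rw [Finset.Ico_add_one_right_eq_Icc]
      rw [hIco, Finset.sum_Ico_eq_sum_range]
      have e : ∀ k ∈ Finset.range (m+1-2), (1/(((2+k:ℕ):ℝ)-1) - 1/((2+k:ℕ):ℝ))
          = (fun i : ℕ => 1/((i:ℝ)+1)) k - (fun i : ℕ => 1/((i:ℝ)+1)) (k+1) := by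
        intro k _; push_cast; ring_nf
      rw [Finset.sum_congr rfl e, Finset.sum_range_sub' (fun i : ℕ => 1/((i:ℝ)+1))]
      rcases Nat.exists_eq_add_of_le h with ⟨k, hk⟩
      subst hk
      push_cast
      norm_num
      ring
    rw [← Finset.mul_sum, tel] at step1
    have hm1 : (1:ℝ) ≤ (m:ℝ) := by exact_mod_cast h
    have hmpos : (0:ℝ) < (m:ℝ) := by linarith
    have e2 : (m:ℝ)^2 * (1 - 1/(m:ℝ)) = (m:ℝ)^2 - m := by field_simp
    nlinarith
  have : ((m / 1 : ℕ) : ℝ) ^ 2 = (m:ℝ)^2 := by norm_num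
  rw [this]
  nlinarith [show (1:ℝ) ≤ (m:ℝ) from by exact_mod_cast h]

lemma fA_pos {μ : ℕ → ℕ} (hμ1 : μ 1 = 1) {x : ℝ} (hx : 0 < x) : ∀ n, 0 < fA μ n x := by
  intro n
  induction n using Nat.strong_induction_on with
  | _ n ih =>
    match n with
    | 0 => rw [fA_zero]; norm_num
    | n + 1 =>
      rw [fA_succ]
      apply mul_pos (by positivity)
      apply Finset.sum_pos' (fun j _ => mul_nonneg (Nat.cast_nonneg _)
        (le_of_lt (ih (n - j) (by omega))))
      refine ⟨0, Finset.mem_range.2 (by omega), ?_⟩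
      have h1 := one_le_sigmaA' hμ1 1 le_rfl
      have h2 := ih (n - 0) (by omega)
      simp only [Nat.sub_zero] at *
      nlinarith

lemma fA_rec (μ : ℕ → ℕ) (x : ℝ) (n : ℕ) (hn : 1 ≤ n) : (n:ℝ) * fA μ n x
    = x * ∑ j ∈ Finset.range n, (sigmaA μ (j+1) : ℝ) * fA μ (n-1-j) x := by
  obtain ⟨m, rfl⟩ : ∃ m, n = m + 1 := ⟨n - 1, by omega⟩
  rw [fA_succ]
  have e : ∀ j, m + 1 - 1 - j = m - j := fun j => by omega
  simp only [e]
  have h0 : ((m:ℝ) + 1) ≠ 0 := by positivity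
  push_cast
  field_simp

/-- lower-bound sequence: `cc x n = x(x+1)⋯(x+n-1)/n!` -/
noncomputable def cc (x : ℝ) : ℕ → ℝ
  | 0 => 1
  | n+1 => cc x n * (x + n) / (n + 1)

noncomputable def Q (b : ℕ) : ℝ := ((b:ℝ)+1)*((b:ℝ)+2)*((b:ℝ)+3)*((b:ℝ)+4)/24

lemma Q_pos (b : ℕ) : 0 < Q b := by unfold Q; positivity

lemma cc_ge_Q {x : ℝ} (hx : 5 ≤ x) : ∀ b, Q b ≤ cc x b := by
  intro b
  induction b with
  | zero => rw [cc]; unfold Q; norm_num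
  | succ b ih =>
    have hQpos : 0 < Q b := Q_pos b
    have h1 : Q b * (x + b) / (b + 1) ≤ cc x b * (x + b) / ((b:ℝ)+1) := by
      gcongr <;> linarith
    refine le_trans ?_ (le_trans h1 (le_of_eq (by rw [cc])))
    have h2 : Q (b+1) ≤ Q b * ((5:ℝ) + b) / (b+1) := by
      rw [le_div_iff₀ (by positivity)]
      unfold Q
      push_cast
      nlinarith [sq_nonneg ((b:ℝ)), Nat.cast_nonneg (α := ℝ) b]
    refine le_trans h2 ?_
    gcongr
    all_goals linarith

lemma cc_sum {x : ℝ} (hx : 0 < x) : ∀ n : ℕ,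
    x * ∑ m ∈ Finset.range (n+1), cc x m = ((n:ℝ)+1) * cc x (n+1) := by
  intro n
  induction n with
  | zero => simp [cc]
  | succ k ihk =>
    rw [Finset.sum_range_succ, mul_add, ihk]
    have h : cc x (k+1+1) = cc x (k+1) * (x + (k+1)) / ((k:ℝ)+1+1) := by
      rw [cc]; push_cast; ring_nf
    rw [h]
    push_cast
    field_simp
    ring

lemma fA_ge_cc {μ : ℕ → ℕ} (hμ1 : μ 1 = 1) {x : ℝ} (hx : 5 ≤ x) : ∀ n, cc x n ≤ fA μ n x := by
  intro n
  induction n using Nat.strong_induction_on with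
  | _ n ih =>
    match n with
    | 0 => rw [fA_zero, cc]
    | n + 1 =>
      have hx0 : (0:ℝ) < x := by linarith
      have key : ((n:ℝ)+1) * cc x (n+1) ≤ ((n:ℝ)+1) * fA μ (n+1) x := by
        have hrec := fA_rec μ x (n+1) (by omega)
        push_cast at hrec
        rw [hrec, ← cc_sum hx0 n]
        have hreflect : ∑ m ∈ Finset.range (n+1), cc x m
            = ∑ j ∈ Finset.range (n+1), cc x (n - j) := by
          rw [← Finset.sum_range_reflect (fun j => cc x j) (n+1)]
          apply Finset.sum_congr rfl
          intro j hj
          have e : n + 1 - 1 - j = n - j := by omega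
          rw [e]
        rw [hreflect]
        apply mul_le_mul_of_nonneg_left ?_ (le_of_lt hx0)
        apply Finset.sum_le_sum
        intro j hj
        simp only [Finset.mem_range] at hj
        have hcc : cc x (n - j) ≤ fA μ (n - j) x := ih (n - j) (by omega)
        have hccQ : Q (n - j) ≤ cc x (n - j) := cc_ge_Q hx (n - j)
        have hQp : 0 < Q (n - j) := Q_pos _
        have hs : (1:ℝ) ≤ (sigmaA μ (j+1) : ℝ) := one_le_sigmaA' hμ1 _ (by omega)
        nlinarith
      have hpos : (0:ℝ) < (n:ℝ)+1 := by positivity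
      exact le_of_mul_le_mul_left key hpos

lemma fA_ge_Q {μ : ℕ → ℕ} (hμ1 : μ 1 = 1) {x : ℝ} (hx : 5 ≤ x) (n : ℕ) :
    Q n ≤ fA μ n x := (cc_ge_Q hx n).trans (fA_ge_cc hμ1 hx n)

lemma fA_ge_num {μ : ℕ → ℕ} (hμ1 : μ 1 = 1) {x : ℝ} (hx : 5 ≤ x) (n : ℕ) {B : ℝ}
    (hB : B ≤ Q n) : B ≤ fA μ n x := hB.trans (fA_ge_Q hμ1 hx n)

lemma prod_bd {gb s w C : ℝ} (hC : C ≤ gb) (hs : 1 ≤ s) (hw : 0 ≤ w) (hCnn : 0 ≤ C) :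
    C * w ≤ gb * (s * w) := by
  have hgb : 0 ≤ gb := hCnn.trans hC
  nlinarith [mul_le_mul_of_nonneg_right hC hw,
    mul_le_mul_of_nonneg_right (mul_le_mul_of_nonneg_left hs hgb) hw]

lemma small_fact : ∀ b < 9, ∀ j < b, (j + 1 < b ∨ 6 ≤ b) →
    sig2 (b+j+1) * 24 ≤ (b+1)*(b+2)*(b+3)*(b+4) := by decide

end Aux
section Star
open Finset

lemma star {μ : ℕ → ℕ} (hμ1 : μ 1 = 1) (hμ : ∀ j, μ j ≤ j) {x : ℝ} (hx : 5 ≤ x)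
    {a b : ℕ} (ha : 1 ≤ a) (hab : a ≤ b) (hb : 2 ≤ b) :
    ∑ j ∈ Finset.range a, (sigmaA μ (b+j+1) : ℝ) * fA μ (a-1-j) x
      ≤ fA μ b x * ∑ j ∈ Finset.range a, (sigmaA μ (j+1) : ℝ) * fA μ (a-1-j) x := by
  have hx0 : (0:ℝ) < x := by linarith
  have hgpos := fA_pos hμ1 hx0
  have hgbQ : Q b ≤ fA μ b x := fA_ge_Q hμ1 hx b
  have hgbnn : (0:ℝ) ≤ fA μ b x := (hgpos b).le
  rw [Finset.mul_sum]
  have hterm : ∀ j, ((sigmaA μ (b+j+1) : ℝ) ≤ fA μ b x) →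
      (sigmaA μ (b+j+1) : ℝ) * fA μ (a-1-j) x
        ≤ fA μ b x * ((sigmaA μ (j+1) : ℝ) * fA μ (a-1-j) x) := by
    intro j hle
    exact le_trans (mul_le_mul_of_nonneg_right hle (hgpos _).le)
      (prod_bd le_rfl (one_le_sigmaA' hμ1 _ (by omega)) (hgpos _).le hgbnn)
  by_cases hb9 : 9 ≤ b
  · -- large b : use sig2 ≤ 2 m² and Q b ≥ 8 b²
    apply Finset.sum_le_sum
    intro j hj
    rw [Finset.mem_range] at hj
    apply hterm j
    have h1 : ((sigmaA μ (b+j+1)) : ℝ) ≤ (sig2 (b+j+1) : ℝ) := by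
      exact_mod_cast sigmaA_le_sig2 hμ (b+j+1)
    have h2 := sig2_le (b+j+1)
    have h3 : ((b+j+1 : ℕ) : ℝ) ≤ 2*(b:ℝ) := by
      have : b + j + 1 ≤ 2 * b := by omega
      exact_mod_cast this
    have h3nn : (0:ℝ) ≤ ((b+j+1 : ℕ) : ℝ) := Nat.cast_nonneg _
    have h4 : 2*((b+j+1 : ℕ):ℝ)^2 ≤ 8*(b:ℝ)^2 := by nlinarith
    have h5 : 8*(b:ℝ)^2 ≤ Q b := by
      have hb' : (9:ℝ) ≤ (b:ℝ) := by exact_mod_cast hb9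
      unfold Q
      rw [le_div_iff₀ (by norm_num)]
      nlinarith [sq_nonneg ((b:ℝ)-9)]
    linarith
  · push_neg at hb9
    by_cases hdiag : a = b ∧ b ≤ 5
    · -- diagonal small case
      obtain ⟨rfl, hb5⟩ := hdiag
      have hQ1 : (5:ℝ) ≤ fA μ 1 x := fA_ge_num hμ1 hx 1 (by unfold Q; norm_num)
      have hQ2 : (15:ℝ) ≤ fA μ 2 x := fA_ge_num hμ1 hx 2 (by unfold Q; norm_num)
      have hQ3 : (35:ℝ) ≤ fA μ 3 x := fA_ge_num hμ1 hx 3 (by unfold Q; norm_num)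
      have hQ4 : (70:ℝ) ≤ fA μ 4 x := fA_ge_num hμ1 hx 4 (by unfold Q; norm_num)
      have hQ5 : (126:ℝ) ≤ fA μ 5 x := fA_ge_num hμ1 hx 5 (by unfold Q; norm_num)
      have hg0 : fA μ 0 x = 1 := fA_zero μ x
      have hs1 : (1:ℝ) ≤ (sigmaA μ 1 : ℝ) := one_le_sigmaA' hμ1 1 (by omega)
      have hs2 : (1:ℝ) ≤ (sigmaA μ 2 : ℝ) := one_le_sigmaA' hμ1 2 (by omega)
      have hs3 : (1:ℝ) ≤ (sigmaA μ 3 : ℝ) := one_le_sigmaA' hμ1 3 (by omega)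
      have hs4 : (1:ℝ) ≤ (sigmaA μ 4 : ℝ) := one_le_sigmaA' hμ1 4 (by omega)
      have hs5 : (1:ℝ) ≤ (sigmaA μ 5 : ℝ) := one_le_sigmaA' hμ1 5 (by omega)
      have hu3 : (sigmaA μ 3 : ℝ) ≤ 10 := sigmaA_le_sig2' hμ 3 (by decide)
      have hu4 : (sigmaA μ 4 : ℝ) ≤ 21 := sigmaA_le_sig2' hμ 4 (by decide)
      have hu5 : (sigmaA μ 5 : ℝ) ≤ 26 := sigmaA_le_sig2' hμ 5 (by decide)
      have hu6 : (sigmaA μ 6 : ℝ) ≤ 50 := sigmaA_le_sig2' hμ 6 (by decide)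
      have hu7 : (sigmaA μ 7 : ℝ) ≤ 50 := sigmaA_le_sig2' hμ 7 (by decide)
      have hu8 : (sigmaA μ 8 : ℝ) ≤ 85 := sigmaA_le_sig2' hμ 8 (by decide)
      have hu9 : (sigmaA μ 9 : ℝ) ≤ 91 := sigmaA_le_sig2' hμ 9 (by decide)
      have hu10 : (sigmaA μ 10 : ℝ) ≤ 130 := sigmaA_le_sig2' hμ 10 (by decide)
      have hp0 : (0:ℝ) < fA μ 0 x := hgpos 0
      have hp1 : (0:ℝ) < fA μ 1 x := hgpos 1
      have hp2 : (0:ℝ) < fA μ 2 x := hgpos 2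
      have hp3 : (0:ℝ) < fA μ 3 x := hgpos 3
      have hp4 : (0:ℝ) < fA μ 4 x := hgpos 4
      interval_cases a
      · -- b = 2
        simp only [Finset.sum_range_succ, Finset.sum_range_zero, zero_add]
        norm_num [hg0]
        linarith [prod_bd hQ2 hs1 hp1.le (by norm_num : (0:ℝ) ≤ 15),
          prod_bd hQ2 hs2 (by norm_num : (0:ℝ) ≤ (1:ℝ)) (by norm_num : (0:ℝ) ≤ 15),
          mul_le_mul_of_nonneg_right hu3 hp1.le]
      · -- b = 3
        simp only [Finset.sum_range_succ, Finset.sum_range_zero, zero_add]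
        norm_num [hg0]
        linarith [prod_bd hQ3 hs1 hp2.le (by norm_num : (0:ℝ) ≤ 35),
          prod_bd hQ3 hs2 hp1.le (by norm_num : (0:ℝ) ≤ 35),
          prod_bd hQ3 hs3 (by norm_num : (0:ℝ) ≤ (1:ℝ)) (by norm_num : (0:ℝ) ≤ 35),
          mul_le_mul_of_nonneg_right hu4 hp2.le,
          mul_le_mul_of_nonneg_right hu5 hp1.le]
      · -- b = 4
        simp only [Finset.sum_range_succ, Finset.sum_range_zero, zero_add]
        norm_num [hg0]
        linarith [prod_bd hQ4 hs1 hp3.le (by norm_num : (0:ℝ) ≤ 70),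
          prod_bd hQ4 hs2 hp2.le (by norm_num : (0:ℝ) ≤ 70),
          prod_bd hQ4 hs3 hp1.le (by norm_num : (0:ℝ) ≤ 70),
          prod_bd hQ4 hs4 (by norm_num : (0:ℝ) ≤ (1:ℝ)) (by norm_num : (0:ℝ) ≤ 70),
          mul_le_mul_of_nonneg_right hu5 hp3.le,
          mul_le_mul_of_nonneg_right hu6 hp2.le,
          mul_le_mul_of_nonneg_right hu7 hp1.le]
      · -- b = 5
        simp only [Finset.sum_range_succ, Finset.sum_range_zero, zero_add]
        norm_num [hg0]
        linarith [prod_bd hQ5 hs1 hp4.le (by norm_num : (0:ℝ) ≤ 126),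
          prod_bd hQ5 hs2 hp3.le (by norm_num : (0:ℝ) ≤ 126),
          prod_bd hQ5 hs3 hp2.le (by norm_num : (0:ℝ) ≤ 126),
          prod_bd hQ5 hs4 hp1.le (by norm_num : (0:ℝ) ≤ 126),
          prod_bd hQ5 hs5 (by norm_num : (0:ℝ) ≤ (1:ℝ)) (by norm_num : (0:ℝ) ≤ 126),
          mul_le_mul_of_nonneg_right hu6 hp4.le,
          mul_le_mul_of_nonneg_right hu7 hp3.le,
          mul_le_mul_of_nonneg_right hu8 hp2.le,
          mul_le_mul_of_nonneg_right hu9 hp1.le]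
    · -- small b, termwise via `small_fact`
      apply Finset.sum_le_sum
      intro j hj
      rw [Finset.mem_range] at hj
      apply hterm j
      have hcase : j + 1 < b ∨ 6 ≤ b := by
        rcases Nat.lt_or_ge a b with h | h
        · left; omega
        · right
          have : a = b := le_antisymm hab h
          omega
      have h1 := small_fact b (by omega) j (by omega) hcase
      have h1' : (sig2 (b+j+1) : ℝ) * 24 ≤ ((b:ℝ)+1)*((b:ℝ)+2)*((b:ℝ)+3)*((b:ℝ)+4) := by
        exact_mod_cast h1
      have h2 : ((sigmaA μ (b+j+1)) : ℝ) ≤ (sig2 (b+j+1) : ℝ) := by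
        exact_mod_cast sigmaA_le_sig2 hμ (b+j+1)
      have h3 : (sig2 (b+j+1) : ℝ) ≤ Q b := by
        unfold Q
        rw [le_div_iff₀ (by norm_num)]
        linarith
      linarith

end Star
section Main
open Finset

lemma sigmaA_one {μ : ℕ → ℕ} (hμ1 : μ 1 = 1) : sigmaA μ 1 = 1 := by simp [sigmaA, hμ1]

lemma sigmaA_two {μ : ℕ → ℕ} (hμ1 : μ 1 = 1) : sigmaA μ 2 = 1 + 2 * μ 2 := by
  have h : Nat.divisors 2 = {1, 2} := by decide
  simp [sigmaA, h, hμ1]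

lemma fA_one {μ : ℕ → ℕ} (hμ1 : μ 1 = 1) (x : ℝ) : fA μ 1 x = x := by
  rw [fA_succ]
  simp [sigmaA_one hμ1, fA_zero]

lemma fA_two {μ : ℕ → ℕ} (hμ1 : μ 1 = 1) (x : ℝ) :
    fA μ 2 x = x / 2 * (x + (1 + 2 * (μ 2 : ℝ))) := by
  rw [fA_succ]
  rw [Finset.sum_range_succ, Finset.sum_range_one]
  norm_num [fA_zero, fA_one hμ1, sigmaA_one hμ1, sigmaA_two hμ1]
  try push_cast
  try ring

lemma g2_le_g1sq {μ : ℕ → ℕ} (hμ1 : μ 1 = 1) (hμ : ∀ j, μ j ≤ j) {x : ℝ} (hx : 5 ≤ x) :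
    fA μ 2 x ≤ fA μ 1 x * fA μ 1 x := by
  rw [fA_one hμ1, fA_two hμ1]
  have h2 : ((μ 2 : ℕ) : ℝ) ≤ 2 := by exact_mod_cast hμ 2
  nlinarith

lemma main_lt {μ : ℕ → ℕ} (hμ1 : μ 1 = 1) (hμ : ∀ j, μ j ≤ j) {x : ℝ} (hx : 5 ≤ x) :
    ∀ n a b : ℕ, a + b = n → 1 ≤ a → a ≤ b → 2 ≤ b → fA μ n x < fA μ a x * fA μ b x := by
  intro n
  induction n using Nat.strong_induction_on with
  | _ n ihn =>
  intro a b hn ha hab hb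
  have hx0 : (0:ℝ) < x := by linarith
  have hpos := fA_pos hμ1 hx0
  have IH' : ∀ a' b', a' + b' < n → 1 ≤ a' → 1 ≤ b' → ¬(a' = 1 ∧ b' = 1) →
      fA μ (a'+b') x < fA μ a' x * fA μ b' x := by
    intro a' b' hlt ha' hb' hne
    rcases le_total a' b' with h | h
    · exact ihn _ hlt a' b' rfl ha' h (by omega)
    · have h2 := ihn (a'+b') hlt b' a' (by omega) hb' h (by omega)
      rw [mul_comm] at h2
      exact h2
  have hprod : ∀ m, m < b → fA μ (a + m) x ≤ fA μ a x * fA μ m x := by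
    intro m hm
    rcases Nat.eq_zero_or_pos m with rfl | hm1
    · simp [fA_zero]
    · by_cases hc : a = 1 ∧ m = 1
      · obtain ⟨rfl, rfl⟩ := hc
        exact g2_le_g1sq hμ1 hμ hx
      · exact (IH' a m (by omega) ha hm1 hc).le
  have hrec := fA_rec μ x n (by omega)
  have hsplit : ∑ j ∈ Finset.range n, (sigmaA μ (j+1):ℝ) * fA μ (n-1-j) x
      = (∑ j ∈ Finset.range b, (sigmaA μ (j+1):ℝ) * fA μ (n-1-j) x)
        + ∑ j ∈ Finset.range a, (sigmaA μ (b+j+1):ℝ) * fA μ (a-1-j) x := by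
    rw [Finset.range_eq_Ico, ← Finset.sum_Ico_consecutive _ (Nat.zero_le b)
      (show b ≤ n by omega)]
    congr 1
    · rw [Finset.range_eq_Ico]
    rw [Finset.sum_Ico_eq_sum_range]
    have hna : n - b = a := by omega
    rw [hna]
    apply Finset.sum_congr rfl
    intro j hj
    rw [Finset.mem_range] at hj
    have e2 : n - 1 - (b + j) = a - 1 - j := by omega
    rw [e2]
  -- the two recurrences for a and b
  have hTb := fA_rec μ x b (by omega)
  have hUa := fA_rec μ x a (by omega)
  -- termwise bound for the first sum
  have hS1le : ∀ j ∈ Finset.range b, (sigmaA μ (j+1):ℝ) * fA μ (n-1-j) x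
      ≤ (sigmaA μ (j+1):ℝ) * (fA μ a x * fA μ (b-1-j) x) := by
    intro j hj
    rw [Finset.mem_range] at hj
    have e : n - 1 - j = a + (b-1-j) := by omega
    rw [e]
    exact mul_le_mul_of_nonneg_left (hprod (b-1-j) (by omega)) (Nat.cast_nonneg _)
  have hfactor : ∑ j ∈ Finset.range b, (sigmaA μ (j+1):ℝ) * (fA μ a x * fA μ (b-1-j) x)
      = fA μ a x * ∑ j ∈ Finset.range b, (sigmaA μ (j+1):ℝ) * fA μ (b-1-j) x := by
    rw [Finset.mul_sum]
    exact Finset.sum_congr rfl fun j _ => by ring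
  have hstar := star hμ1 hμ hx ha hab hb
  have hcomb : (∑ j ∈ Finset.range b, (sigmaA μ (j+1):ℝ) * fA μ (n-1-j) x)
      + (∑ j ∈ Finset.range a, (sigmaA μ (b+j+1):ℝ) * fA μ (a-1-j) x)
      < fA μ a x * (∑ j ∈ Finset.range b, (sigmaA μ (j+1):ℝ) * fA μ (b-1-j) x)
        + fA μ b x * (∑ j ∈ Finset.range a, (sigmaA μ (j+1):ℝ) * fA μ (a-1-j) x) := by
    by_cases h12 : a = 1 ∧ b = 2
    · obtain ⟨rfl, rfl⟩ := h12
      have hS1 : ∑ j ∈ Finset.range 2, (sigmaA μ (j+1):ℝ) * fA μ (n-1-j) x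
          ≤ fA μ 1 x * ∑ j ∈ Finset.range 2, (sigmaA μ (j+1):ℝ) * fA μ (2-1-j) x := by
        rw [← hfactor]
        exact Finset.sum_le_sum hS1le
      have hS2 : ∑ j ∈ Finset.range 1, (sigmaA μ (2+j+1):ℝ) * fA μ (1-1-j) x
          < fA μ 2 x * ∑ j ∈ Finset.range 1, (sigmaA μ (j+1):ℝ) * fA μ (1-1-j) x := by
        rw [Finset.sum_range_one, Finset.sum_range_one]
        norm_num [fA_zero, sigmaA_one hμ1]
        calc (sigmaA μ 3 : ℝ) ≤ 10 := sigmaA_le_sig2' hμ 3 (by decide)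
          _ < 15 := by norm_num
          _ ≤ fA μ 2 x := fA_ge_num hμ1 hx 2 (by unfold Q; norm_num)
      linarith
    · have hS1 : ∑ j ∈ Finset.range b, (sigmaA μ (j+1):ℝ) * fA μ (n-1-j) x
          < fA μ a x * ∑ j ∈ Finset.range b, (sigmaA μ (j+1):ℝ) * fA μ (b-1-j) x := by
        rw [← hfactor]
        apply Finset.sum_lt_sum hS1le
        refine ⟨0, Finset.mem_range.2 (by omega), ?_⟩
        have e : n - 1 - 0 = a + (b-1-0) := by omega
        rw [e]
        have hlt : fA μ (a + (b-1-0)) x < fA μ a x * fA μ (b-1-0) x := by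
          have : b - 1 - 0 = b - 1 := by omega
          rw [this]
          exact IH' a (b-1) (by omega) ha (by omega) (by omega)
        have hs1 : (0:ℝ) < (sigmaA μ (0+1) : ℝ) := by
          have := one_le_sigmaA' hμ1 1 le_rfl
          norm_num at this ⊢
          linarith
        exact mul_lt_mul_of_pos_left hlt hs1
      linarith
  have hfin : (n:ℝ) * fA μ n x < (n:ℝ) * (fA μ a x * fA μ b x) := by
    rw [hrec, hsplit]
    calc x * ((∑ j ∈ Finset.range b, (sigmaA μ (j+1):ℝ) * fA μ (n-1-j) x)
        + ∑ j ∈ Finset.range a, (sigmaA μ (b+j+1):ℝ) * fA μ (a-1-j) x)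
        < x * (fA μ a x * (∑ j ∈ Finset.range b, (sigmaA μ (j+1):ℝ) * fA μ (b-1-j) x)
          + fA μ b x * (∑ j ∈ Finset.range a, (sigmaA μ (j+1):ℝ) * fA μ (a-1-j) x)) :=
        by exact mul_lt_mul_of_pos_left hcomb hx0
      _ = fA μ a x * (x * ∑ j ∈ Finset.range b, (sigmaA μ (j+1):ℝ) * fA μ (b-1-j) x)
          + fA μ b x * (x * ∑ j ∈ Finset.range a, (sigmaA μ (j+1):ℝ) * fA μ (a-1-j) x) :=
        by ring
      _ = fA μ a x * ((b:ℝ) * fA μ b x) + fA μ b x * ((a:ℝ) * fA μ a x) := by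
        rw [← hTb, ← hUa]
      _ = (n:ℝ) * (fA μ a x * fA μ b x) := by
        have : (n:ℝ) = (a:ℝ) + (b:ℝ) := by exact_mod_cast hn.symm
        rw [this]; ring
  exact lt_of_mul_lt_mul_left hfin (Nat.cast_nonneg n)

end Main

/-- Polynomization of the Bessenrodt-Ono inequality for a multiset A with mu(1) = 1 and mu(j) <= j: f_{A,a}(x) f_{A,b}(x) > f_{A,a+b}(x) for all real x >= 5 and a, b >= 1 except a = b = 1; for a = b = 1, f_{A,1}(5)^2 >= f_{A,2}(5) (equality iff mu(2) = 2) and f_{A,1}(x)^2 > f_{A,2}(x) for x > 5. -/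
theorem stmt_17 (μ : ℕ → ℕ) (hμ1 : μ 1 = 1) (hμ : ∀ j, μ j ≤ j) :
    (∀ a b : ℕ, 1 ≤ a → 1 ≤ b → ¬(a = 1 ∧ b = 1) → ∀ x : ℝ, 5 ≤ x →
      fA μ a x * fA μ b x > fA μ (a + b) x) ∧
    fA μ 1 5 * fA μ 1 5 ≥ fA μ 2 5 ∧
    (fA μ 1 5 * fA μ 1 5 = fA μ 2 5 ↔ μ 2 = 2) ∧
    (∀ x : ℝ, 5 < x → fA μ 1 x * fA μ 1 x > fA μ 2 x) := by
  have hμ2 : ((μ 2 : ℕ) : ℝ) ≤ 2 := by exact_mod_cast hμ 2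
  refine ⟨?_, ?_, ?_, ?_⟩
  · intro a b ha hb hne x hx
    rcases le_total a b with h | h
    · exact main_lt hμ1 hμ hx (a+b) a b rfl ha h (by omega)
    · have h2 := main_lt hμ1 hμ hx (a+b) b a (by omega) hb h (by omega)
      rw [mul_comm] at h2
      exact h2
  · rw [fA_one hμ1, fA_two hμ1]
    nlinarith
  · rw [fA_one hμ1, fA_two hμ1]
    constructor
    · intro h
      have : ((μ 2 : ℕ) : ℝ) = 2 := by nlinarith
      exact_mod_cast this
    · intro h
      rw [h]
      norm_num
  · intro x hx
    rw [fA_one hμ1, fA_two hμ1]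
    nlinarith
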